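/- If L_h ⊆ R is a lexsegment ideal whose quotient has Hilbert polynomial p (i.e., h(j) = p(j) for j ≫ 0, where h is the Hilbert function of R/L_h), then the saturation of L_h equals the saturated lexsegment ideal L_p associated to p. -/

import Mathlib

open MvPolynomial

noncomputable section

/-- The polynomial ring `K[x_0,…,x_n]` in `n+1` variables. -/
abbrev PR (K : Type*) [Field K] (n : ℕ) := MvPolynomial (Fin (n+1)) K

variable {K : Type*} [Field K] {n : ℕ}

/-- The monomial `x^A`. -/
def mon (A : Fin (n+1) →₀ ℕ) : PR K n := monomial A 1

/-- Total degree of the monomial with exponent vector `A`. -/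
def mdeg (A : Fin (n+1) →₀ ℕ) : ℕ := ∑ i, A i

/-- The largest index of a variable dividing `x^A` (0 if `A = 0`). -/
def maxIdx (A : Fin (n+1) →₀ ℕ) : Fin (n+1) := WithBot.unbotD 0 (A.support.max)

/-- The exponent vector of `(x_i / x_j) · x^A`. -/
def shiftM (A : Fin (n+1) →₀ ℕ) (i j : Fin (n+1)) : Fin (n+1) →₀ ℕ :=
  A + Finsupp.single i 1 - Finsupp.single j 1

/-- `I` is a monomial ideal: generated by a set of monomials. -/
def IsMonomialIdeal (I : Ideal (PR K n)) : Prop :=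
  ∃ S : Set (Fin (n+1) →₀ ℕ), I = Ideal.span ((fun A => (mon A : PR K n)) '' S)

/-- Strongly stable monomial ideal. -/
def StronglyStable (I : Ideal (PR K n)) : Prop :=
  ∀ A : Fin (n+1) →₀ ℕ, mon A ∈ I → ∀ i j : Fin (n+1), A j ≠ 0 → i < j →
    mon (shiftM A i j) ∈ I

/-- Stable monomial ideal. -/
def Stable (I : Ideal (PR K n)) : Prop :=
  ∀ A : Fin (n+1) →₀ ℕ, A ≠ 0 → mon A ∈ I → ∀ i : Fin (n+1), i < maxIdx A →
    mon (shiftM A i (maxIdx A)) ∈ I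

/-- `x^A` is a minimal monomial generator of `I`. -/
def MinGen (I : Ideal (PR K n)) (A : Fin (n+1) →₀ ℕ) : Prop :=
  mon A ∈ I ∧ ∀ B : Fin (n+1) →₀ ℕ, B ≤ A → B ≠ A → mon B ∉ I

/-- The set of exponent vectors of minimal monomial generators of `I`. -/
def Gens (I : Ideal (PR K n)) : Set (Fin (n+1) →₀ ℕ) := {A | MinGen I A}

/-- The irrelevant maximal ideal `(x_0,…,x_n)`. -/
def irrIdeal (K : Type*) [Field K] (n : ℕ) : Ideal (PR K n) :=
  Ideal.span (Set.range fun i : Fin (n+1) => (X i : PR K n))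

/-- `I` is saturated: `(I : (x_0,…,x_n)) = I`. -/
def Saturated (I : Ideal (PR K n)) : Prop :=
  Submodule.colon I (irrIdeal K n) = I

/-- The saturation `∪ₖ (I : (x_0,…,x_n)^k)`. -/
def saturationOf (I : Ideal (PR K n)) : Ideal (PR K n) :=
  ⨆ k : ℕ, Submodule.colon I (((irrIdeal K n) ^ k : Ideal (PR K n)) : Set (PR K n))

/-- The Hilbert function of `R/I`: `j ↦ dim_K [R/I]_j`. -/
def hilbF {σ : Type*} (I : Ideal (MvPolynomial σ K)) (j : ℕ) : ℕ :=
  Module.finrank K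
    ((homogeneousSubmodule σ K j).map (Ideal.Quotient.mkₐ K I).toLinearMap)

/-- `p` is the Hilbert polynomial of `R/I`. -/
def IsHilbPoly {σ : Type*} (I : Ideal (MvPolynomial σ K)) (p : Polynomial ℚ) : Prop :=
  ∃ N : ℕ, ∀ j : ℕ, N ≤ j → p.eval (j : ℚ) = (hilbF I j : ℚ)

/-- The binomial-coefficient polynomial `C(q, k) = q(q-1)⋯(q-k+1)/k!`. -/
def choosePoly (q : Polynomial ℚ) (k : ℕ) : Polynomial ℚ :=
  ((k.factorial : ℚ))⁻¹ • ∏ j ∈ Finset.range k, (q - Polynomial.C (j : ℚ))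

/-- The canonical representation `p(z) = Σ_{i=0}^d [C(z+i,i+1) − C(z+i−b_i,i+1)]`. -/
def canonicalHP (d : ℕ) (b : ℕ → ℕ) : Polynomial ℚ :=
  ∑ i ∈ Finset.range (d+1),
    (choosePoly (Polynomial.X + Polynomial.C (i : ℚ)) (i+1)
      - choosePoly (Polynomial.X + Polynomial.C (i : ℚ) - Polynomial.C (b i : ℚ)) (i+1))

/-- `x^A >_lex x^B`. -/
def LexGt (A B : Fin (n+1) →₀ ℕ) : Prop :=
  ∃ i : Fin (n+1), (∀ j : Fin (n+1), j < i → A j = B j) ∧ B i < A i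

/-- `I` is a lexsegment ideal. -/
def IsLexsegment (I : Ideal (PR K n)) : Prop :=
  IsMonomialIdeal I ∧ ∀ A B : Fin (n+1) →₀ ℕ, mdeg A = mdeg B → mon B ∈ I →
    LexGt A B → mon A ∈ I

/-- `I` is a homogeneous ideal. -/
def Homog (I : Ideal (PR K n)) : Prop :=
  ∀ f ∈ I, ∀ j : ℕ, homogeneousComponent j f ∈ I

/-- The set of right-shifts of `x^A`. -/
def rightShifts (A : Fin (n+1) →₀ ℕ) : Set (Fin (n+1) →₀ ℕ) :=
  {B | ∃ i : Fin (n+1), (i : ℕ) + 2 ≤ n ∧ A i ≠ 0 ∧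
    B = shiftM A (Fin.ofNat (n+1) ((i : ℕ) + 1 : ℕ)) i}

/-- The set of left-shifts of `x^A`. -/
def leftShifts (A : Fin (n+1) →₀ ℕ) : Set (Fin (n+1) →₀ ℕ) :=
  {B | ∃ i : Fin (n+1), 1 ≤ (i : ℕ) ∧ (i : ℕ) + 1 ≤ n ∧ A i ≠ 0 ∧
    B = shiftM A (Fin.ofNat (n+1) ((i : ℕ) - 1 : ℕ)) i}

/-- The monomials `x^A x_r, …, x^A x_{n-1}` with `r = max(x^A)`. -/
def expSet (A : Fin (n+1) →₀ ℕ) : Set (Fin (n+1) →₀ ℕ) :=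
  {B | ∃ j : Fin (n+1), ((maxIdx A : ℕ)) ≤ (j : ℕ) ∧ (j : ℕ) + 1 ≤ n ∧
    B = A + Finsupp.single j 1}

/-- `x^A ≠ 1` is expandable in `I`. -/
def Expandable (I : Ideal (PR K n)) (A : Fin (n+1) →₀ ℕ) : Prop :=
  A ≠ 0 ∧ MinGen I A ∧ ∀ B ∈ rightShifts A, ¬ MinGen I B

/-- `x^A ≠ 1` is contractible in `I`. -/
def Contractible (I : Ideal (PR K n)) (A : Fin (n+1) →₀ ℕ) : Prop :=
  A ≠ 0 ∧ mon A ∉ I ∧ MinGen I (A + Finsupp.single (Fin.ofNat (n+1) (n - 1 : ℕ)) 1) ∧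
    ∀ B ∈ leftShifts A, mon B ∈ I

/-- The expansion of `x^A` in `I`. -/
def expansionIdeal (I : Ideal (PR K n)) (A : Fin (n+1) →₀ ℕ) : Ideal (PR K n) :=
  Ideal.span ((fun B => (mon B : PR K n)) '' ((Gens I \ {A}) ∪ expSet A))

/-- The contraction of `x^A` in `I`. -/
def contractionIdeal (I : Ideal (PR K n)) (A : Fin (n+1) →₀ ℕ) : Ideal (PR K n) :=
  Ideal.span ((fun B => (mon B : PR K n)) '' ((Gens I ∪ {A}) \ expSet A))

/-- Setting `x_{n-1} = x_n = 1` in the exponent vector `A`. -/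
def stripLastTwo (A : Fin (n+1) →₀ ℕ) : Fin (n+1) →₀ ℕ :=
  Finsupp.update (Finsupp.update A (Fin.ofNat (n+1) (n : ℕ)) 0) (Fin.ofNat (n+1) (n - 1 : ℕ)) 0

/-- The double saturation `sat_{x_{n-1},x_n}(I)` (as an ideal of `R`). -/
def doubleSat (I : Ideal (PR K n)) : Ideal (PR K n) :=
  Ideal.span ((fun A => (mon (stripLastTwo A) : PR K n)) '' Gens I)

/-- Restriction of an exponent vector to the first `n` variables. -/
def restrictExp (A : Fin (n+1) →₀ ℕ) : Fin n →₀ ℕ :=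
  Finsupp.comapDomain Fin.castSucc A (Fin.castSucc_injective n).injOn

/-- The ideal `I · R^{(1)}` in `K[x_0,…,x_{n-1}]` (for saturated monomial `I`). -/
def restrictIdeal (I : Ideal (PR K n)) : Ideal (MvPolynomial (Fin n) K) :=
  Ideal.span ((fun A => (monomial (restrictExp A) (1 : K) : MvPolynomial (Fin n) K)) '' Gens I)

/-- Lex order on exponent vectors in `n` variables. -/
def LexGt' (A B : Fin n →₀ ℕ) : Prop :=
  ∃ i : Fin n, (∀ j : Fin n, j < i → A j = B j) ∧ B i < A i

/-- Monomial ideal in `K[x_0,…,x_{n-1}]`. -/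
def IsMonomialIdeal' (I : Ideal (MvPolynomial (Fin n) K)) : Prop :=
  ∃ S : Set (Fin n →₀ ℕ),
    I = Ideal.span ((fun A => (monomial A (1 : K) : MvPolynomial (Fin n) K)) '' S)

/-- Lexsegment ideal in `K[x_0,…,x_{n-1}]`. -/
def IsLexsegment' (I : Ideal (MvPolynomial (Fin n) K)) : Prop :=
  IsMonomialIdeal' I ∧ ∀ A B : Fin n →₀ ℕ, (∑ i, A i) = (∑ i, B i) →
    monomial B (1 : K) ∈ I → LexGt' A B → monomial A (1 : K) ∈ I

/-- `I` is almost lexsegment: saturated strongly stable with `I·R^{(1)}` lexsegment. -/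
def AlmostLex (I : Ideal (PR K n)) : Prop :=
  IsMonomialIdeal I ∧ StronglyStable I ∧ Saturated I ∧ IsLexsegment' (restrictIdeal I)

/-- A graded free resolution of the ideal `I`, with `rank i` the rank of the `i`-th
free module and `twist i k` the degrees of the standard basis elements. -/
structure GradedFreeRes (I : Ideal (PR K n)) where
  rank : ℕ → ℕ
  twist : (i : ℕ) → Fin (rank i) → ℕ
  diff : (i : ℕ) → ((Fin (rank (i+1)) → PR K n) →ₗ[PR K n] (Fin (rank i) → PR K n))
  aug : (Fin (rank 0) → PR K n) →ₗ[PR K n] PR K n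
  aug_range : LinearMap.range aug = I
  aug_graded : ∀ k, aug (Pi.single k 1) ∈ homogeneousSubmodule (Fin (n+1)) K (twist 0 k)
  diff_graded : ∀ i k l, diff i (Pi.single k 1) l = 0 ∨
    (twist i l ≤ twist (i+1) k ∧
      diff i (Pi.single k 1) l ∈ homogeneousSubmodule (Fin (n+1)) K (twist (i+1) k - twist i l))
  exact_aug : LinearMap.range (diff 0) = LinearMap.ker aug
  exact_diff : ∀ i, LinearMap.range (diff (i+1)) = LinearMap.ker (diff i)

/-- A resolution is minimal if all differential entries lie in the irrelevant ideal. -/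
def MinimalRes {I : Ideal (PR K n)} (F : GradedFreeRes I) : Prop :=
  ∀ i k l, constantCoeff (F.diff i (Pi.single k 1) l) = 0

-- basic lemmas
open Finsupp in
lemma mdeg_eq_degree (A : Fin (n+1) →₀ ℕ) : mdeg A = A.degree := by
  rw [mdeg, Finsupp.degree]
  exact (Finset.sum_subset (Finset.subset_univ _) (by
    intro x _ hx
    exact Finsupp.notMem_support_iff.mp hx)).symm

lemma mdeg_add (A B : Fin (n+1) →₀ ℕ) : mdeg (A + B) = mdeg A + mdeg B := by
  simp [mdeg, Finset.sum_add_distrib]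

lemma mdeg_single (i : Fin (n+1)) (k : ℕ) : mdeg (Finsupp.single i k) = k := by
  classical
  simp [mdeg, Finsupp.single_apply, Finset.sum_ite_eq]

lemma mdeg_eq_zero {A : Fin (n+1) →₀ ℕ} (h : mdeg A = 0) : A = 0 := by
  ext i
  have := Finset.sum_eq_zero_iff.mp h i (Finset.mem_univ i)
  simpa using this

lemma mon_mul (A B : Fin (n+1) →₀ ℕ) : (mon A : PR K n) * mon B = mon (A + B) := by
  simp [mon, monomial_mul]

lemma lexGt_trichotomy {A B : Fin (n+1) →₀ ℕ} (h : A ≠ B) : LexGt A B ∨ LexGt B A := by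
  classical
  set s : Finset (Fin (n+1)) := Finset.univ.filter (fun i => A i ≠ B i) with hs
  have hne : s.Nonempty := by
    by_contra hemp
    apply h
    ext i
    by_contra hi
    exact hemp ⟨i, by simp [hs, hi]⟩
  set i0 := s.min' hne with hi0
  have hi0mem : A i0 ≠ B i0 := by
    have := s.min'_mem hne
    simp [hs] at this
    exact this
  have hlt : ∀ j : Fin (n+1), j < i0 → A j = B j := by
    intro j hj
    by_contra hne2
    exact absurd (s.min'_le j (by simp [hs, hne2])) (not_le.mpr hj)
  rcases lt_or_gt_of_ne hi0mem with h1 | h1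
  · right
    exact ⟨i0, fun j hj => (hlt j hj).symm, h1⟩
  · left
    exact ⟨i0, hlt, h1⟩

lemma lexGt_add_right {A B : Fin (n+1) →₀ ℕ} (C : Fin (n+1) →₀ ℕ) (h : LexGt A B) :
    LexGt (A + C) (B + C) := by
  obtain ⟨i, h1, h2⟩ := h
  exact ⟨i, fun j hj => by simp [h1 j hj], by simpa using h2⟩

lemma mon_mem_span_iff {S : Set (Fin (n+1) →₀ ℕ)} {A : Fin (n+1) →₀ ℕ} :
    (mon A : PR K n) ∈ Ideal.span ((fun B => (mon B : PR K n)) '' S) ↔ ∃ s ∈ S, s ≤ A := by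
  classical
  have : ((fun B => (mon B : PR K n)) '' S) = ((fun s => (monomial s (1:K))) '' S) := rfl
  rw [this, mem_ideal_span_monomial_image]
  constructor
  · intro h
    apply h
    simp [mon, support_monomial]
  · intro h xi hxi
    simp [mon, support_monomial] at hxi
    subst hxi
    exact h
lemma mon_mem_of_le {I : Ideal (PR K n)} (hI : IsMonomialIdeal I) {A B : Fin (n+1) →₀ ℕ}
    (h : mon A ∈ I) (hle : A ≤ B) : (mon B : PR K n) ∈ I := by
  obtain ⟨S, rfl⟩ := hI
  rw [mon_mem_span_iff] at h ⊢
  obtain ⟨s, hs, hsA⟩ := h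
  exact ⟨s, hs, hsA.trans hle⟩

lemma mem_monomialIdeal_iff {I : Ideal (PR K n)} (hI : IsMonomialIdeal I) {f : PR K n} :
    f ∈ I ↔ ∀ A ∈ f.support, (mon A : PR K n) ∈ I := by
  classical
  obtain ⟨S, rfl⟩ := hI
  constructor
  · intro h A hA
    rw [mon_mem_span_iff]
    have heq : ((fun B => (mon B : PR K n)) '' S) = ((fun s => (monomial s (1:K))) '' S) := rfl
    rw [heq, mem_ideal_span_monomial_image] at h
    exact h A hA
  · intro h
    rw [show ((fun B => (mon B : PR K n)) '' S) = ((fun s => (monomial s (1:K))) '' S) from rfl,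
      mem_ideal_span_monomial_image]
    intro xi hxi
    have := h xi hxi
    rwa [mon_mem_span_iff] at this

lemma X_eq_mon (i : Fin (n+1)) : (X i : PR K n) = mon (Finsupp.single i 1) := by
  simp [mon, ← X_pow_eq_monomial]

lemma pow_irr (k : ℕ) :
    (irrIdeal K n) ^ k = Ideal.span ((fun C => (mon C : PR K n)) '' {C | mdeg C = k}) := by
  classical
  induction k with
  | zero =>
    rw [pow_zero]
    have himg : ((fun C => (mon C : PR K n)) '' {C | mdeg C = 0}) = {1} := by
      ext x
      simp only [Set.mem_image, Set.mem_setOf_eq, Set.mem_singleton_iff]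
      constructor
      · rintro ⟨C, hC, rfl⟩
        rw [mdeg_eq_zero hC]
        simp [mon]
      · rintro rfl
        exact ⟨0, by simp [mdeg], by simp [mon]⟩
    rw [himg, Ideal.span_singleton_one, Ideal.one_eq_top]
  | succ k ih =>
    rw [pow_succ, ih, irrIdeal, Ideal.span_mul_span']
    apply le_antisymm
    · rw [Ideal.span_le]
      rintro x ⟨a, ⟨C, hC, rfl⟩, b, ⟨i, rfl⟩, rfl⟩
      simp only [Set.mem_setOf_eq] at hC
      apply Ideal.subset_span
      refine ⟨C + Finsupp.single i 1, by simp [mdeg_add, mdeg_single, hC], ?_⟩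
      show (mon (C + Finsupp.single i 1) : PR K n) = mon C * X i
      rw [X_eq_mon, mon_mul]
    · rw [Ideal.span_le]
      rintro x ⟨C, hC, rfl⟩
      simp only [Set.mem_setOf_eq] at hC
      have hCne : C ≠ 0 := by
        intro h0
        rw [h0] at hC
        simp [mdeg] at hC
      obtain ⟨i, hi⟩ : ∃ i, C i ≠ 0 := by
        by_contra hall
        push_neg at hall
        exact hCne (Finsupp.ext fun i => hall i)
      have hi1 : 1 ≤ C i := Nat.one_le_iff_ne_zero.mpr hi
      have hdecomp : C = (C - Finsupp.single i 1) + Finsupp.single i 1 := by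
        ext j
        simp only [Finsupp.add_apply, Finsupp.tsub_apply, Finsupp.single_apply]
        by_cases hij : i = j
        · subst hij
          rw [if_pos rfl]
          omega
        · simp [hij]
      have hdeg : mdeg (C - Finsupp.single i 1) = k := by
        have h2 := mdeg_add (C - Finsupp.single i 1) (Finsupp.single i 1)
        rw [← hdecomp, mdeg_single, hC] at h2
        omega
      apply Ideal.subset_span
      refine ⟨(mon (C - Finsupp.single i 1) : PR K n), ⟨_, hdeg, rfl⟩, X i, ⟨i, rfl⟩, ?_⟩
      show (mon (C - Finsupp.single i 1) : PR K n) * X i = mon C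
      rw [X_eq_mon, mon_mul, ← hdecomp]
lemma mem_saturationOf {I : Ideal (PR K n)} {f : PR K n} :
    f ∈ saturationOf I ↔ ∃ k : ℕ, f ∈ Submodule.colon I (((irrIdeal K n) ^ k : Ideal (PR K n)) : Set (PR K n)) := by
  have hmono : Monotone (fun k : ℕ => Submodule.colon I (((irrIdeal K n) ^ k : Ideal (PR K n)) : Set (PR K n))) := by
    intro k l hkl x hx
    rw [Submodule.mem_colon] at hx ⊢
    intro p hp
    exact hx p (Ideal.pow_le_pow_right hkl hp)
  exact Submodule.mem_iSup_of_directed _ hmono.directed_le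

lemma mon_mem_colon_pow {I : Ideal (PR K n)} {A : Fin (n+1) →₀ ℕ} {k : ℕ}
    (h : ∀ C : Fin (n+1) →₀ ℕ, mdeg C = k → (mon (A + C) : PR K n) ∈ I) :
    (mon A : PR K n) ∈ Submodule.colon I (((irrIdeal K n) ^ k : Ideal (PR K n)) : Set (PR K n)) := by
  rw [Submodule.mem_colon]
  intro p hp
  rw [pow_irr] at hp
  induction hp using Submodule.span_induction with
  | mem x hx =>
    obtain ⟨C, hC, rfl⟩ := hx
    rw [smul_eq_mul, mon_mul]
    exact h C hC
  | zero => simp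
  | add x y _ _ hx hy => rw [smul_add]; exact Submodule.add_mem _ hx hy
  | smul a x _ hx =>
    rw [smul_comm]
    exact Submodule.smul_mem _ _ hx

lemma descent {Lp : Ideal (PR K n)} (hLp1 : IsLexsegment Lp) (hLp2 : Saturated Lp)
    {B : Fin (n+1) →₀ ℕ} (h : (mon (B + Finsupp.single (Fin.last n) 1) : PR K n) ∈ Lp) :
    (mon B : PR K n) ∈ Lp := by
  have hall : ∀ i : Fin (n+1), (mon (B + Finsupp.single i 1) : PR K n) ∈ Lp := by
    intro i
    rcases eq_or_ne i (Fin.last n) with rfl | hne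
    · exact h
    · have hilt : i < Fin.last n := Fin.lt_last_iff_ne_last.mpr hne
      apply hLp1.2 _ _ (by simp [mdeg_add, mdeg_single]) h
      refine ⟨i, ?_, ?_⟩
      · intro j hj
        have hji : j ≠ i := ne_of_lt hj
        have hjl : j ≠ Fin.last n := ne_of_lt (hj.trans hilt)
        simp [Finsupp.single_apply, hji.symm, hjl.symm]
      · simp [Finsupp.single_apply, hne.symm]
  rw [← hLp2, Submodule.mem_colon]
  intro p hp
  rw [irrIdeal] at hp
  induction hp using Submodule.span_induction with
  | mem x hx =>
    obtain ⟨i, rfl⟩ := hx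
    rw [smul_eq_mul]
    show (mon B : PR K n) * X i ∈ Lp
    rw [X_eq_mon, mon_mul]
    exact hall i
  | zero => simp
  | add x y _ _ hx hy => rw [smul_add]; exact Submodule.add_mem _ hx hy
  | smul a x _ hx =>
    rw [smul_comm]
    exact Submodule.smul_mem _ _ hx

lemma descent_many {Lp : Ideal (PR K n)} (hLp1 : IsLexsegment Lp) (hLp2 : Saturated Lp)
    {B : Fin (n+1) →₀ ℕ} (k : ℕ)
    (h : (mon (B + Finsupp.single (Fin.last n) k) : PR K n) ∈ Lp) :
    (mon B : PR K n) ∈ Lp := by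
  induction k generalizing B with
  | zero => simpa using h
  | succ k ih =>
    apply ih
    apply descent hLp1 hLp2
    rwa [add_assoc, ← Finsupp.single_add]
lemma homogeneousSubmodule_eq_span (j : ℕ) :
    homogeneousSubmodule (Fin (n+1)) K j
      = Submodule.span K ((fun A => (mon A : PR K n)) '' {A | mdeg A = j}) := by
  apply le_antisymm
  · intro p hp
    rw [mem_homogeneousSubmodule] at hp
    rw [as_sum p]
    apply Submodule.sum_mem
    intro v hv
    have hdeg : mdeg v = j := by
      have := hp (MvPolynomial.mem_support_iff.mp hv)
      rw [mdeg_eq_degree, Finsupp.degree_eq_weight_one]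
      exact this
    have : (monomial v) (coeff v p) = (coeff v p) • (mon v : PR K n) := by
      rw [mon, smul_monomial, smul_eq_mul, mul_one]
    rw [this]
    exact Submodule.smul_mem _ _ (Submodule.subset_span ⟨v, hdeg, rfl⟩)
  · rw [Submodule.span_le]
    rintro x ⟨A, hA, rfl⟩
    rw [SetLike.mem_coe, mem_homogeneousSubmodule]
    exact isHomogeneous_monomial 1 (by rw [← mdeg_eq_degree]; exact hA)

lemma hilbF_monomial_count {I : Ideal (PR K n)} (hI : IsMonomialIdeal I) (j : ℕ) :
    ∃ D : Finset (Fin (n+1) →₀ ℕ),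
      (∀ A, A ∈ D ↔ (mdeg A = j ∧ (mon A : PR K n) ∉ I)) ∧ hilbF I j = D.card := by
  classical
  -- the ambient finite set of exponent vectors of degree j
  set c : Fin (n+1) →₀ ℕ := Finsupp.equivFunOnFinite.symm (fun _ => j) with hc
  have hcap : ∀ i, c i = j := fun i => rfl
  set T : Finset (Fin (n+1) →₀ ℕ) := (Finset.Iic c).filter (fun A => mdeg A = j) with hT
  have hTmem : ∀ A, A ∈ T ↔ mdeg A = j := by
    intro A
    simp only [hT, Finset.mem_filter, Finset.mem_Iic, and_iff_right_iff_imp]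
    intro hA
    rw [Finsupp.le_def]
    intro i
    rw [hcap i, ← hA, mdeg]
    exact Finset.single_le_sum (fun _ _ => Nat.zero_le _) (Finset.mem_univ i)
  set D : Finset (Fin (n+1) →₀ ℕ) := T.filter (fun A => (mon A : PR K n) ∉ I) with hD
  have hDmem : ∀ A, A ∈ D ↔ (mdeg A = j ∧ (mon A : PR K n) ∉ I) := by
    intro A
    simp only [hD, Finset.mem_filter, hTmem]
  refine ⟨D, hDmem, ?_⟩
  set q := (Ideal.Quotient.mkₐ K I).toLinearMap with hq
  have hqmk : ∀ f : PR K n, q f = Ideal.Quotient.mk I f := fun f => rfl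
  set v : ↥D → (PR K n ⧸ I) := fun i => q (mon ↑i) with hv
  have hspan : (homogeneousSubmodule (Fin (n+1)) K j).map q
      = Submodule.span K (Set.range v) := by
    rw [homogeneousSubmodule_eq_span, Submodule.map_span, ← Set.image_comp]
    apply le_antisymm
    · rw [Submodule.span_le]
      rintro x ⟨A, hA, rfl⟩
      simp only [Set.mem_setOf_eq] at hA
      by_cases hmem : (mon A : PR K n) ∈ I
      · have : (q ∘ fun A => (mon A : PR K n)) A = 0 := by
          simp only [Function.comp_apply, hqmk]
          rwa [Ideal.Quotient.eq_zero_iff_mem]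
        rw [this]
        exact Submodule.zero_mem _
      · exact Submodule.subset_span ⟨⟨A, (hDmem A).mpr ⟨hA, hmem⟩⟩, rfl⟩
    · rw [Submodule.span_le]
      rintro x ⟨i, rfl⟩
      exact Submodule.subset_span ⟨↑i, ((hDmem ↑i).mp i.2).1, rfl⟩
  have hli : LinearIndependent K v := by
    rw [linearIndependent_iff']
    intro s g hsum i0 hi0
    by_contra hg
    have hfI : (∑ i ∈ s, g i • (mon ↑i : PR K n)) ∈ I := by
      rw [← Ideal.Quotient.eq_zero_iff_mem, ← hqmk, map_sum]
      simp only [map_smul]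
      exact hsum
    have hcoeff : coeff (↑i0) (∑ i ∈ s, g i • (mon ↑i : PR K n)) = g i0 := by
      rw [MvPolynomial.coeff_sum]
      have hterm : ∀ i : ↥D, g i • (mon ↑i : PR K n) = monomial ↑i (g i) := by
        intro i
        rw [mon, smul_monomial, smul_eq_mul, mul_one]
      rw [Finset.sum_congr rfl (fun i _ => by rw [hterm i, coeff_monomial])]
      rw [Finset.sum_eq_single i0]
      · rw [if_pos rfl]
      · intro b _ hb
        rw [if_neg (fun h => hb (Subtype.ext h))]
      · intro h
        exact absurd hi0 h
    have hsupp : (↑i0 : Fin (n+1) →₀ ℕ) ∈ (∑ i ∈ s, g i • (mon ↑i : PR K n)).support := by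
      rw [MvPolynomial.mem_support_iff, hcoeff]
      exact hg
    have : (mon (↑i0 : Fin (n+1) →₀ ℕ) : PR K n) ∈ I :=
      (mem_monomialIdeal_iff hI).mp hfI _ hsupp
    exact ((hDmem ↑i0).mp i0.2).2 this
  have : hilbF I j = Module.finrank K (Submodule.span K (Set.range v)) := by
    rw [hilbF, ← hspan]
  rw [this, finrank_span_eq_card hli, Fintype.card_coe]
lemma exists_degree_finset (j : ℕ) :
    ∃ T : Finset (Fin (n+1) →₀ ℕ), ∀ A, A ∈ T ↔ mdeg A = j := by
  classical
  set c : Fin (n+1) →₀ ℕ := Finsupp.equivFunOnFinite.symm (fun _ => j) with hc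
  refine ⟨(Finset.Iic c).filter (fun A => mdeg A = j), ?_⟩
  intro A
  simp only [Finset.mem_filter, Finset.mem_Iic, and_iff_right_iff_imp]
  intro hA
  rw [Finsupp.le_def]
  intro i
  show A i ≤ j
  rw [← hA, mdeg]
  exact Finset.single_le_sum (fun _ _ => Nat.zero_le _) (Finset.mem_univ i)

lemma lex_closed_finset_eq {j : ℕ} {s t : Finset (Fin (n+1) →₀ ℕ)}
    (hsj : ∀ A ∈ s, mdeg A = j) (htj : ∀ A ∈ t, mdeg A = j)
    (hs : ∀ A B, mdeg A = j → B ∈ s → LexGt A B → A ∈ s)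
    (ht : ∀ A B, mdeg A = j → B ∈ t → LexGt A B → A ∈ t)
    (hcard : s.card = t.card) : s = t := by
  classical
  have key : ∀ s t : Finset (Fin (n+1) →₀ ℕ),
      (∀ A ∈ s, mdeg A = j) → (∀ A ∈ t, mdeg A = j) →
      (∀ A B, mdeg A = j → B ∈ s → LexGt A B → A ∈ s) →
      (∀ A B, mdeg A = j → B ∈ t → LexGt A B → A ∈ t) →
      s.card = t.card → s ⊆ t := by
    intro s t hsj htj hs ht hcard
    by_contra hsub
    obtain ⟨a, ha, hat⟩ : ∃ a ∈ s, a ∉ t := by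
      by_contra hno
      push_neg at hno
      exact hsub hno
    have hsub2 : t ⊆ s.erase a := by
      intro b hb
      have hba : b ≠ a := fun h => hat (h ▸ hb)
      rcases lexGt_trichotomy hba with hlex | hlex
      · exact Finset.mem_erase.mpr ⟨hba, hs b a (htj b hb) ha hlex⟩
      · exact absurd (ht a b (hsj a ha) hb hlex) hat
    have h1 : t.card ≤ s.card - 1 := by
      calc t.card ≤ (s.erase a).card := Finset.card_le_card hsub2
        _ = s.card - 1 := Finset.card_erase_of_mem ha
    have h2 : 1 ≤ s.card := Finset.card_pos.mpr ⟨a, ha⟩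
    omega
  have h1 := key s t hsj htj hs ht hcard
  exact Finset.eq_of_subset_of_card_le h1 (le_of_eq hcard.symm)
lemma deg_agree_of_hilbF_eq {Lh Lp : Ideal (PR K n)}
    (hLh : IsLexsegment Lh) (hLp : IsLexsegment Lp) {j : ℕ}
    (h : hilbF Lh j = hilbF Lp j) :
    ∀ A : Fin (n+1) →₀ ℕ, mdeg A = j → ((mon A : PR K n) ∈ Lh ↔ (mon A : PR K n) ∈ Lp) := by
  classical
  obtain ⟨T, hT⟩ := exists_degree_finset (n := n) j
  obtain ⟨D₁, hD₁, hc₁⟩ := hilbF_monomial_count hLh.1 j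
  obtain ⟨D₂, hD₂, hc₂⟩ := hilbF_monomial_count hLp.1 j
  set s : Finset (Fin (n+1) →₀ ℕ) := T.filter (fun A => (mon A : PR K n) ∈ Lh) with hsdef
  set t : Finset (Fin (n+1) →₀ ℕ) := T.filter (fun A => (mon A : PR K n) ∈ Lp) with htdef
  have hseq : ∀ A, A ∈ s ↔ (mdeg A = j ∧ (mon A : PR K n) ∈ Lh) := by
    intro A; simp [hsdef, Finset.mem_filter, hT]
  have hteq : ∀ A, A ∈ t ↔ (mdeg A = j ∧ (mon A : PR K n) ∈ Lp) := by
    intro A; simp [htdef, Finset.mem_filter, hT]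
  -- cardinalities
  have hD₁T : D₁ = T.filter (fun A => (mon A : PR K n) ∉ Lh) := by
    ext A; simp [hD₁, Finset.mem_filter, hT]
  have hD₂T : D₂ = T.filter (fun A => (mon A : PR K n) ∉ Lp) := by
    ext A; simp [hD₂, Finset.mem_filter, hT]
  have hcs : s.card + D₁.card = T.card := by
    rw [hsdef, hD₁T]
    exact Finset.card_filter_add_card_filter_not _
  have hct : t.card + D₂.card = T.card := by
    rw [htdef, hD₂T]
    exact Finset.card_filter_add_card_filter_not _
  have hDD : D₁.card = D₂.card := by rw [← hc₁, ← hc₂, h]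
  have hcard : s.card = t.card := by omega
  have hst : s = t := by
    apply lex_closed_finset_eq (j := j)
    · intro A hA; exact ((hseq A).mp hA).1
    · intro A hA; exact ((hteq A).mp hA).1
    · intro A B hA hB hlex
      rw [hseq] at hB ⊢
      exact ⟨hA, hLh.2 A B (hA.trans hB.1.symm) hB.2 hlex⟩
    · intro A B hA hB hlex
      rw [hteq] at hB ⊢
      exact ⟨hA, hLp.2 A B (hA.trans hB.1.symm) hB.2 hlex⟩
    · exact hcard
  intro A hA
  constructor
  · intro hmem
    exact ((hteq A).mp (hst ▸ (hseq A).mpr ⟨hA, hmem⟩)).2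
  · intro hmem
    exact ((hseq A).mp (hst.symm ▸ (hteq A).mpr ⟨hA, hmem⟩)).2
lemma mdeg_mono {A B : Fin (n+1) →₀ ℕ} (h : A ≤ B) : mdeg A ≤ mdeg B :=
  Finset.sum_le_sum fun i _ => Finsupp.le_def.mp h i

lemma single_le_single_of_le (i : Fin (n+1)) {k l : ℕ} (h : k ≤ l) :
    (Finsupp.single i k : Fin (n+1) →₀ ℕ) ≤ Finsupp.single i l := by
  rw [Finsupp.le_def]
  intro j
  classical
  simp only [Finsupp.single_apply]
  split <;> omega

end
/-- the saturation of a lexsegment ideal with Hilbert polynomial `p`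
is the saturated lexsegment ideal `L_p`. -/
theorem saturation_of_lexsegment_eq_lexIdeal
    {K : Type*} [Field K] {n : ℕ} (p : Polynomial ℚ)
    (Lh : Ideal (PR K n)) (hLh : IsLexsegment Lh) (hLhp : IsHilbPoly Lh p)
    (Lp : Ideal (PR K n)) (hLp1 : IsLexsegment Lp) (hLp2 : Saturated Lp)
    (hLp3 : IsHilbPoly Lp p) :
    saturationOf Lh = Lp := by
  obtain ⟨N₁, hN₁⟩ := hLhp
  obtain ⟨N₂, hN₂⟩ := hLp3
  set N := max N₁ N₂ with hNdef
  have hsame : ∀ A : Fin (n+1) →₀ ℕ, N ≤ mdeg A →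
      ((mon A : PR K n) ∈ Lh ↔ (mon A : PR K n) ∈ Lp) := by
    intro A hA
    apply deg_agree_of_hilbF_eq hLh hLp1 _ A rfl
    have e1 := hN₁ (mdeg A) (le_trans (le_max_left _ _) hA)
    have e2 := hN₂ (mdeg A) (le_trans (le_max_right _ _) hA)
    exact_mod_cast e1.symm.trans e2
  apply le_antisymm
  · -- saturationOf Lh ⊆ Lp
    intro f hf
    rw [mem_saturationOf] at hf
    obtain ⟨k, hk⟩ := hf
    rw [mem_monomialIdeal_iff hLp1.1]
    intro A hA
    set L : Fin (n+1) := Fin.last n with hL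
    have hCk : (mon (Finsupp.single L k) : PR K n) ∈ (irrIdeal K n) ^ k := by
      rw [pow_irr]
      exact Ideal.subset_span ⟨_, mdeg_single L k, rfl⟩
    have h1 : f * mon (Finsupp.single L k) ∈ Lh := by
      rw [Submodule.mem_colon] at hk
      have := hk _ hCk
      rwa [smul_eq_mul] at this
    have h2 : A + Finsupp.single L k ∈ (f * mon (Finsupp.single L k)).support := by
      rw [MvPolynomial.mem_support_iff, mon, coeff_mul_monomial', if_pos le_add_self,
        add_tsub_cancel_right, mul_one]
      exact MvPolynomial.mem_support_iff.mp hA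
    have h3 : (mon (A + Finsupp.single L k) : PR K n) ∈ Lh :=
      (mem_monomialIdeal_iff hLh.1).mp h1 _ h2
    have h4 : (mon (A + Finsupp.single L (k + N)) : PR K n) ∈ Lh :=
      mon_mem_of_le hLh.1 h3
        (add_le_add (le_refl A) (single_le_single_of_le L (Nat.le_add_right k N)))
    have h5 : (mon (A + Finsupp.single L (k + N)) : PR K n) ∈ Lp := by
      apply (hsame _ ?_).mp h4
      rw [mdeg_add, mdeg_single]
      omega
    exact descent_many hLp1 hLp2 (k + N) h5
  · -- Lp ⊆ saturationOf Lh
    intro f hf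
    rw [mem_saturationOf]
    refine ⟨N, ?_⟩
    rw [Submodule.mem_colon]
    intro q hq
    rw [pow_irr] at hq
    induction hq using Submodule.span_induction with
    | mem x hx =>
      obtain ⟨C, hC, rfl⟩ := hx
      simp only [Set.mem_setOf_eq] at hC
      rw [smul_eq_mul]
      rw [mem_monomialIdeal_iff hLh.1]
      intro B hB
      have hcoeff : coeff B (f * (mon C : PR K n)) ≠ 0 := MvPolynomial.mem_support_iff.mp hB
      rw [mon, coeff_mul_monomial'] at hcoeff
      by_cases hCB : C ≤ B
      · rw [if_pos hCB, mul_one] at hcoeff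
        have hAf : (mon (B - C) : PR K n) ∈ Lp :=
          (mem_monomialIdeal_iff hLp1.1).mp hf _ (MvPolynomial.mem_support_iff.mpr hcoeff)
        have hBLp : (mon B : PR K n) ∈ Lp := mon_mem_of_le hLp1.1 hAf tsub_le_self
        apply (hsame B ?_).mpr hBLp
        calc N = mdeg C := hC.symm
          _ ≤ mdeg B := mdeg_mono hCB
      · rw [if_neg hCB] at hcoeff
        exact absurd rfl hcoeff
    | zero => rw [smul_zero]; exact Submodule.zero_mem _
    | add x y _ _ hx hy => rw [smul_add]; exact Submodule.add_mem _ hx hy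
    | smul a x _ hx =>
      rw [smul_comm]
      exact Submodule.smul_mem _ _ hx
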